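/- Let r be a natural number with r ≥ 1. Let A_{i,j}, for 1 ≤ i < j ≤ r, be 2×2 real matrices each of whose second row is zero. Then the 2r×2r matrix J̄_{2r} + R(A_{i,j}) is invertible. -/

import Mathlib

open Matrix

/-- The 2×2 matrix `J = [[0,1],[-1,0]]`. -/
def Jmat : Matrix (Fin 2) (Fin 2) ℝ := !![0, 1; -1, 0]

/-- The `2r × 2r` block-diagonal matrix with `r` diagonal blocks equal to `J`. -/
def Jbar (r : ℕ) : Matrix (Fin (2 * r)) (Fin (2 * r)) ℝ :=
  Matrix.of fun i j =>
    if (i : ℕ) / 2 = (j : ℕ) / 2 then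
      Jmat ⟨(i : ℕ) % 2, by omega⟩ ⟨(j : ℕ) % 2, by omega⟩
    else 0

/-- Given 2×2 matrices `A i j` (used for `i < j`), the antisymmetric `2r × 2r` block matrix
whose `(i,j)`-th 2×2 block is `A i j` for `i < j`, `-(A j i)ᵀ` for `i > j`, and `0` for
`i = j`. -/
def Rblock {r : ℕ} (A : Fin r → Fin r → Matrix (Fin 2) (Fin 2) ℝ) :
    Matrix (Fin (2 * r)) (Fin (2 * r)) ℝ :=
  Matrix.of fun x y =>
    if h : (x : ℕ) / 2 < (y : ℕ) / 2 then
      A ⟨(x : ℕ) / 2, by have := y.2; omega⟩ ⟨(y : ℕ) / 2, by have := y.2; omega⟩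
        ⟨(x : ℕ) % 2, by omega⟩ ⟨(y : ℕ) % 2, by omega⟩
    else if h' : (y : ℕ) / 2 < (x : ℕ) / 2 then
      - A ⟨(y : ℕ) / 2, by have := x.2; omega⟩ ⟨(x : ℕ) / 2, by have := x.2; omega⟩
          ⟨(y : ℕ) % 2, by omega⟩ ⟨(x : ℕ) % 2, by omega⟩
    else 0

def eE (r : ℕ) : Fin r ⊕ Fin r ≃ Fin (2 * r) where
  toFun s := Sum.elim (fun i : Fin r => (⟨2 * i, by omega⟩ : Fin (2 * r)))
    (fun i : Fin r => (⟨2 * i + 1, by omega⟩ : Fin (2 * r))) s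
  invFun x := if (x : ℕ) % 2 = 0 then Sum.inl ⟨(x : ℕ) / 2, by have := x.isLt; omega⟩
    else Sum.inr ⟨(x : ℕ) / 2, by have := x.isLt; omega⟩
  left_inv s := by
    rcases s with i | i
    · simp only [Sum.elim_inl]
      simp only [show 2 * (i : ℕ) % 2 = 0 by omega, ↓reduceIte]
      exact congrArg Sum.inl (Fin.ext (show 2 * (i : ℕ) / 2 = (i : ℕ) by omega))
    · simp only [Sum.elim_inr]
      simp only [show ¬ ((2 * (i : ℕ) + 1) % 2 = 0) by omega, ↓reduceIte]
      exact congrArg Sum.inr (Fin.ext (show (2 * (i : ℕ) + 1) / 2 = (i : ℕ) by omega))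
  right_inv x := by
    dsimp only
    by_cases h : (x : ℕ) % 2 = 0
    · rw [if_pos h]; simp only [Sum.elim_inl]; exact Fin.ext (by dsimp only; omega)
    · rw [if_neg h]; simp only [Sum.elim_inr]; exact Fin.ext (by dsimp only; omega)

lemma Mval {r : ℕ} (A : Fin r → Fin r → Matrix (Fin 2) (Fin 2) ℝ)
    (i j : Fin r) (b c : Fin 2) :
    (Jbar r + Rblock A) ⟨2 * (i : ℕ) + (b : ℕ), by have := i.isLt; have := b.isLt; omega⟩
      ⟨2 * (j : ℕ) + (c : ℕ), by have := j.isLt; have := c.isLt; omega⟩ =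
    if i = j then Jmat b c else if i < j then A i j b c else - A j i c b := by
  have hb := b.isLt; have hc := c.isLt
  simp only [Matrix.add_apply, Jbar, Rblock, Matrix.of_apply]
  have e1 : (2 * (i : ℕ) + (b : ℕ)) / 2 = (i : ℕ) := by omega
  have e2 : (2 * (i : ℕ) + (b : ℕ)) % 2 = (b : ℕ) := by omega
  have e3 : (2 * (j : ℕ) + (c : ℕ)) / 2 = (j : ℕ) := by omega
  have e4 : (2 * (j : ℕ) + (c : ℕ)) % 2 = (c : ℕ) := by omega
  simp only [e1, e2, e3, e4, Fin.eta]
  rcases lt_trichotomy i j with h | h | h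
  · have hv : (i : ℕ) < (j : ℕ) := h
    rw [if_neg (by omega), dif_pos hv, if_neg (Fin.ne_of_lt h), if_pos h]
    simp
  · subst h
    rw [if_pos rfl, dif_neg (by omega), dif_neg (by omega), if_pos rfl]
    simp
  · have hv : (j : ℕ) < (i : ℕ) := h
    rw [if_neg (by omega), dif_neg (by omega), dif_pos hv,
      if_neg (Fin.ne_of_gt h), if_neg (not_lt_of_gt h)]
    simp


/-- if each `A i j` (for `i < j`) has zero second row, then the `2r × 2r`
matrix `J̄₂ᵣ + R(A)` is invertible. -/
theorem stmt_4 (r : ℕ) (hr : 1 ≤ r)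
    (A : Fin r → Fin r → Matrix (Fin 2) (Fin 2) ℝ)
    (hA : ∀ i j : Fin r, i < j → ∀ y : Fin 2, A i j 1 y = 0) :
    IsUnit (Jbar r + Rblock A) := by
  set M := Jbar r + Rblock A with hM
  set e := eE r
  have key : ∀ (i j : Fin r) (b c : Fin 2),
      M ⟨2 * (i : ℕ) + (b : ℕ), by have := i.isLt; have := b.isLt; omega⟩
        ⟨2 * (j : ℕ) + (c : ℕ), by have := j.isLt; have := c.isLt; omega⟩ =
      if i = j then Jmat b c else if i < j then A i j b c else - A j i c b :=
    fun i j b c => Mval A i j b c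
  set Bm : Matrix (Fin r) (Fin r) ℝ := Matrix.of fun i j => M (e (.inl i)) (e (.inl j)) with hBm
  set Um : Matrix (Fin r) (Fin r) ℝ := Matrix.of fun i j => M (e (.inl i)) (e (.inr j)) with hUm
  set Tm : Matrix (Fin r) (Fin r) ℝ := Matrix.of fun i j => M (e (.inr i)) (e (.inl j)) with hTm
  have hin : ∀ i : Fin r, e (.inl i) = (⟨2 * (i : ℕ) + ((0 : Fin 2) : ℕ), by have := i.isLt; omega⟩ : Fin (2 * r)) := by
    intro i; exact Fin.ext (by simp [e, eE])
  have hin' : ∀ i : Fin r, e (.inr i) = (⟨2 * (i : ℕ) + ((1 : Fin 2) : ℕ), by have := i.isLt; omega⟩ : Fin (2 * r)) := by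
    intro i; exact Fin.ext (by simp [e, eE])
  have hsub : M.submatrix e e = fromBlocks Bm Um Tm 0 := by
    ext x y
    rcases x with i | i <;> rcases y with j | j <;>
      simp only [Matrix.submatrix_apply, fromBlocks_apply₁₁, fromBlocks_apply₁₂,
        fromBlocks_apply₂₁, fromBlocks_apply₂₂, hBm, hUm, hTm, Matrix.of_apply, Matrix.zero_apply]
    rw [hin' i, hin' j, key]
    rcases lt_trichotomy i j with h | h | h
    · rw [if_neg (Fin.ne_of_lt h), if_pos h, hA i j h]
    · subst h; rw [if_pos rfl]; simp [Jmat]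
    · rw [if_neg (Fin.ne_of_gt h), if_neg (not_lt_of_gt h), hA j i h]; simp
  have hUtri : Um.BlockTriangular id := by
    intro i j hij
    have hij : j < i := hij
    simp only [hUm, Matrix.of_apply]
    rw [hin i, hin' j, key]
    rw [if_neg (Fin.ne_of_gt hij), if_neg (not_lt_of_gt hij), hA j i hij]
    simp
  have hUdiag : ∀ i : Fin r, Um i i = 1 := by
    intro i
    simp only [hUm, Matrix.of_apply]
    rw [hin i, hin' i, key, if_pos rfl]
    simp [Jmat]
  have hTtri : Tm.BlockTriangular OrderDual.toDual := by
    intro i j hij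
    have hij : i < j := hij
    simp only [hTm, Matrix.of_apply]
    rw [hin' i, hin j, key]
    rw [if_neg (Fin.ne_of_lt hij), if_pos hij]
    exact hA i j hij 0
  have hTdiag : ∀ i : Fin r, Tm i i = -1 := by
    intro i
    simp only [hTm, Matrix.of_apply]
    rw [hin' i, hin i, key, if_pos rfl]
    simp [Jmat]
  have hUdet : Um.det = 1 := by
    rw [Matrix.det_of_upperTriangular hUtri]
    simp [hUdiag]
  have hTdet : Tm.det = (-1) ^ r := by
    rw [Matrix.det_of_lowerTriangular Tm hTtri]
    simp [hTdiag]
  set S : Matrix (Fin r ⊕ Fin r) (Fin r ⊕ Fin r) ℝ := fromBlocks 0 1 1 0 with hS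
  have hprod : (M.submatrix e e) * S = fromBlocks Um Bm 0 Tm := by
    rw [hsub, hS, fromBlocks_multiply]
    simp
  have hdet1 : (M.submatrix e e).det = M.det := Matrix.det_submatrix_equiv_self e M
  have hdetprod : M.det * S.det = (-1) ^ r := by
    have := congrArg Matrix.det hprod
    rw [Matrix.det_mul, hdet1, Matrix.det_fromBlocks_zero₂₁, hUdet, hTdet, one_mul] at this
    exact this
  rw [Matrix.isUnit_iff_isUnit_det, isUnit_iff_ne_zero]
  intro h0
  rw [h0, zero_mul] at hdetprod
  exact pow_ne_zero r (by norm_num : (-1 : ℝ) ≠ 0) hdetprod.symm
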